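/- Let A and B be groups with rk A = rk B = n < ∞ such that every abelian subgroup of B is finitely generated and B is torsion-free. Let η : A → B be an injective homomorphism, and let a ∈ A be a nontrivial element contained in a free abelian subgroup of A of rank n. If the center of the centralizer of a in A is isomorphic to ℤ, then the center of the centralizer of η(a) in B is isomorphic to ℤ. -/

import Mathlib

/-- `rk D`: the supremum of the ranks of finitely generated abelian subgroups of
`D`, i.e. the supremum of all `n` such that free abelian of rank `n` embeds. -/
noncomputable def rk (D : Type*) [Group D] : ℕ∞ :=
  ⨆ (n : ℕ) (_ : ∃ φ : Multiplicative (Fin n → ℤ) →* D, Function.Injective φ),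
    (n : ℕ∞)

lemma le_rk (D : Type*) [Group D] (m : ℕ)
    (h : ∃ φ : Multiplicative (Fin m → ℤ) →* D, Function.Injective φ) :
    (m : ℕ∞) ≤ rk D :=
  le_iSup₂ (f := fun (n : ℕ) (_ : ∃ φ : Multiplicative (Fin n → ℤ) →* D, Function.Injective φ)
    => (n : ℕ∞)) m h

lemma exists_zpow_mem {B : Type*} [Group B] (n : ℕ) (hB : rk B = (n : ℕ∞))
    (φ : Multiplicative (Fin n → ℤ) →* B) (hφ : Function.Injective φ)
    (b : B) (hc : ∀ v, Commute b (φ v)) :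
    ∃ k : ℤ, k ≠ 0 ∧ b ^ k ∈ φ.range := by
  by_contra hcon
  push_neg at hcon
  let ψ : Multiplicative (Fin (n+1) → ℤ) →* B :=
    { toFun := fun v => b ^ (v.toAdd 0) *
        φ (Multiplicative.ofAdd (fun i : Fin n => v.toAdd i.succ))
      map_one' := by
        simp only [toAdd_one, Pi.one_apply]
        norm_num
        exact map_one φ
      map_mul' := by
        intro x y
        have hco : Commute (φ (Multiplicative.ofAdd (fun i : Fin n => x.toAdd i.succ)))
            (b ^ (y.toAdd 0)) := ((hc _).symm.zpow_right _)
        simp only [toAdd_mul, Pi.add_apply, zpow_add]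
        rw [hco.mul_mul_mul_comm]
        congr 1
        rw [← map_mul]
        congr 1 }
  have key : ∃ ψ : Multiplicative (Fin (n+1) → ℤ) →* B, Function.Injective ψ := by
    refine ⟨ψ, ?_⟩
    · rw [injective_iff_map_eq_one]
      intro v hv
      simp only [ψ, MonoidHom.coe_mk, OneHom.coe_mk] at hv
      have h0 : v.toAdd 0 = 0 := by
        by_contra h0
        refine hcon _ h0 ⟨(Multiplicative.ofAdd (fun i : Fin n => v.toAdd i.succ))⁻¹, ?_⟩
        rw [map_inv]
        exact (mul_eq_one_iff_eq_inv.mp hv).symm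
      rw [h0, zpow_zero, one_mul] at hv
      have := hφ (by rw [hv, map_one] : φ _ = φ 1)
      have htail : ∀ i : Fin n, v.toAdd i.succ = 0 := by
        intro i
        have := congrFun (congrArg Multiplicative.toAdd this) i
        simpa using this
      apply Multiplicative.toAdd.injective
      funext i
      refine Fin.cases ?_ ?_ i
      · exact h0
      · exact htail
  have := le_rk B (n+1) key
  rw [hB] at this
  exact absurd (Nat.cast_le.mp this) (by omega)

lemma aux_classify (G : Type*) [CommGroup G] (hnt : ∃ g : G, g ≠ 1)
    (hfg : Group.FG G) (htf : ∀ g : G, g ≠ 1 → ¬IsOfFinOrder g)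
    (hdep : ∀ x y : G, ∃ s t : ℤ, ¬(s = 0 ∧ t = 0) ∧ x ^ s = y ^ t) :
    Nonempty (G ≃* Multiplicative ℤ) := by
  letI M := Additive G
  haveI : AddGroup.FG M := GroupFG.iff_add_fg.mp hfg
  haveI : Module.Finite ℤ M := Module.Finite.iff_addGroup_fg.mpr ‹_›
  haveI : NoZeroSMulDivisors ℤ M := by
    constructor
    intro c x hcx
    by_contra hc
    push_neg at hc
    obtain ⟨hc0, hx0⟩ := hc
    refine htf (Additive.toMul x) (fun h => hx0 ?_) (isOfFinOrder_iff_zpow_eq_one.mpr ⟨c, hc0, ?_⟩)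
    · exact (Additive.toMul.injective (by simpa using h))
    · have := congrArg Additive.toMul hcx
      rwa [toMul_zsmul] at this
  haveI : Module.Free ℤ M := Module.free_of_finite_type_torsion_free'
  set ι := Module.Free.ChooseBasisIndex ℤ M with hι
  let b : Module.Basis ι ℤ M := Module.Free.chooseBasis ℤ M
  haveI : Nonempty ι := by
    by_contra hne
    simp only [not_nonempty_iff] at hne
    obtain ⟨g, hg⟩ := hnt
    haveI : Subsingleton (ι →₀ ℤ) := inferInstance
    exact hg (Additive.toMul.injective (b.repr.injective (Subsingleton.elim _ _)))
  haveI : Subsingleton ι := by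
    constructor
    intro i j
    by_contra hij
    obtain ⟨s, t, hst, h⟩ := hdep (Additive.toMul (b i)) (Additive.toMul (b j))
    have h' : s • b i = t • b j := by
      apply Additive.toMul.injective
      rw [toMul_zsmul, toMul_zsmul]
      exact h
    have hs : (b.repr (s • b i)) i = (b.repr (t • b j)) i := by rw [h']
    have ht : (b.repr (s • b i)) j = (b.repr (t • b j)) j := by rw [h']
    simp [Module.Basis.repr_self, Finsupp.single_apply, hij, Ne.symm hij] at hs ht
    exact hst ⟨hs, ht.symm⟩
  haveI : Inhabited ι := Classical.inhabited_of_nonempty ‹_›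
  haveI : Unique ι := Unique.mk' ι
  let e : M ≃ₗ[ℤ] ℤ := b.repr.trans (Finsupp.LinearEquiv.finsuppUnique ℤ ℤ ι)
  exact ⟨AddEquiv.toMultiplicativeRight e.toAddEquiv⟩

/-- If `rk A = rk B = n`, every abelian subgroup of `B` is finitely generated, `B`
is torsion-free, `η : A → B` is injective, `a ≠ 1` lies in a free abelian subgroup
of `A` of rank `n`, and the center of the centralizer of `a` in `A` is infinite
cyclic, then so is the center of the centralizer of `η a` in `B`. -/
theorem center_centralizer_infinite_cyclic (A B : Type*) [Group A] [Group B] (n : ℕ)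
    (hA : rk A = (n : ℕ∞)) (hB : rk B = (n : ℕ∞))
    (hBab : ∀ H : Subgroup B, (∀ x ∈ H, ∀ y ∈ H, x * y = y * x) → Group.FG H)
    (htf : ∀ b : B, b ≠ 1 → ¬IsOfFinOrder b)
    (η : A →* B) (hη : Function.Injective η) (a : A) (ha1 : a ≠ 1)
    (ha : ∃ φ : Multiplicative (Fin n → ℤ) →* A,
      Function.Injective φ ∧ a ∈ φ.range)
    (hZ : Nonempty
      (↥(Subgroup.center (Subgroup.centralizer ({a} : Set A))) ≃* Multiplicative ℤ)) :
    Nonempty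
      (↥(Subgroup.center (Subgroup.centralizer ({η a} : Set B))) ≃* Multiplicative ℤ) := by
  classical
  obtain ⟨φ, hφ, w, hw⟩ := ha
  obtain ⟨ζ⟩ := hZ
  set C : Subgroup B := Subgroup.centralizer ({η a} : Set B) with hCdef
  set D : Subgroup ↥C := Subgroup.center ↥C with hDdef
  set D' : Subgroup B := D.map C.subtype with hD'def
  -- range of φ is commutative
  have hrc : ∀ u v, Commute (φ u) (φ v) := by
    intro u v
    rw [Commute, SemiconjBy, ← map_mul, ← map_mul, mul_comm]
  have haφ : ∀ v, Commute a (φ v) := fun v => hw ▸ hrc w v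
  -- η of the centralizer of a lands in C
  have hmemC : ∀ g : A, g ∈ Subgroup.centralizer ({a} : Set A) → η g ∈ C := by
    intro g hg
    rw [hCdef, Subgroup.mem_centralizer_iff]
    rintro h ⟨rfl⟩
    rw [← map_mul, ← map_mul,
      Subgroup.mem_centralizer_iff.mp hg a (Set.mem_singleton a)]
  have haA : a ∈ Subgroup.centralizer ({a} : Set A) :=
    Subgroup.mem_centralizer_iff.mpr (by rintro h ⟨rfl⟩; rfl)
  have haC : η a ∈ C := hmemC a haA
  -- elements of D' commute with everything in C
  have hcent : ∀ x ∈ D', ∀ c ∈ C, c * x = x * c := by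
    rintro _ ⟨z, hz, rfl⟩ c hc
    exact congrArg Subtype.val (Subgroup.mem_center_iff.mp hz ⟨c, hc⟩)
  -- D' is commutative
  have hDcomm : ∀ x ∈ D', ∀ y ∈ D', x * y = y * x := by
    intro x hx y hy
    exact (hcent x hx y (Subgroup.map_subtype_le D hy)).symm
  -- η a ∈ D'
  have haD' : η a ∈ D' := by
    refine ⟨⟨η a, haC⟩, ?_, rfl⟩
    show _ ∈ Subgroup.center ↥C
    rw [Subgroup.mem_center_iff]
    intro g
    exact Subtype.ext (Subgroup.mem_centralizer_iff.mp g.2 (η a) (Set.mem_singleton _)).symm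
  have haB1 : η a ≠ 1 := fun h => ha1 (hη (by rw [h, map_one]))
  -- the embedded free abelian subgroup of B
  set φ' : Multiplicative (Fin n → ℤ) →* B := η.comp φ with hφ'def
  have hφ' : Function.Injective φ' := hη.comp hφ
  have hφ'C : ∀ v, φ' v ∈ C := fun v => hmemC (φ v)
    (Subgroup.mem_centralizer_iff.mpr (by rintro h ⟨rfl⟩; exact haφ v))
  -- key: x ∈ D' nontrivial gives a power in η(center(centralizer a))
  have hkey : ∀ x : B, x ∈ D' → ∃ (p : ℤ) (z : ↥(Subgroup.center (Subgroup.centralizer ({a} : Set A)))),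
      p ≠ 0 ∧ η ((z : ↥(Subgroup.centralizer ({a} : Set A))) : A) = x ^ p := by
    intro x hx
    have hcomm : ∀ v, Commute x (φ' v) := fun v =>
      (hcent x hx (φ' v) (hφ'C v)).symm
    obtain ⟨p, hp, u, hu⟩ := exists_zpow_mem n hB φ' hφ' x hcomm
    -- φ u ∈ centralizer a
    have h1 : φ u ∈ Subgroup.centralizer ({a} : Set A) :=
      Subgroup.mem_centralizer_iff.mpr (by rintro h ⟨rfl⟩; exact haφ u)
    -- x ^ p ∈ D'
    have hxp : x ^ p ∈ D' := Subgroup.zpow_mem D' hx p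
    have h2 : (⟨φ u, h1⟩ : ↥(Subgroup.centralizer ({a} : Set A))) ∈
        Subgroup.center ↥(Subgroup.centralizer ({a} : Set A)) := by
      rw [Subgroup.mem_center_iff]
      intro g
      refine Subtype.ext (hη ?_)
      have : η (g : A) * x ^ p = x ^ p * η (g : A) :=
        hcent (x ^ p) hxp (η g) (hmemC g g.2)
      rw [← hu] at this
      simpa [map_mul, hφ'def] using this
    exact ⟨p, ⟨⟨φ u, h1⟩, h2⟩, hp, hu⟩
  -- dependence of any two elements of D'
  have hdep : ∀ x : ↥D', ∀ y : ↥D', ∃ s t : ℤ, ¬(s = 0 ∧ t = 0) ∧ x ^ s = y ^ t := by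
    intro x y
    by_cases hx1 : x = 1
    · exact ⟨1, 0, by simp, by simp [hx1]⟩
    obtain ⟨p, zu, hp, hu⟩ := hkey (x : B) x.2
    obtain ⟨q, zv, hq, hv⟩ := hkey (y : B) y.2
    set s : ℤ := Multiplicative.toAdd (ζ zu) with hs
    set t : ℤ := Multiplicative.toAdd (ζ zv) with ht
    have hUV : zu ^ t = zv ^ s := by
      apply ζ.injective
      rw [map_zpow, map_zpow]
      apply Multiplicative.toAdd.injective
      rw [toAdd_zpow, toAdd_zpow, ← hs, ← ht, smul_eq_mul, smul_eq_mul, mul_comm]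
    -- push the equation down to B
    have hBeq : (x : B) ^ (p * t) = (y : B) ^ (q * s) := by
      have h2 : η (((zu : ↥(Subgroup.centralizer ({a} : Set A))) : A) ^ t) =
          η (((zv : ↥(Subgroup.centralizer ({a} : Set A))) : A) ^ s) := by
        rw [← SubgroupClass.coe_zpow, ← SubgroupClass.coe_zpow,
          ← SubgroupClass.coe_zpow, ← SubgroupClass.coe_zpow, hUV]
      rw [map_zpow, map_zpow, hu, hv, ← zpow_mul, ← zpow_mul] at h2
      exact h2
    refine ⟨p * t, q * s, ?_, ?_⟩
    · rintro ⟨hpt, hqs⟩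
      have hs0 : s = 0 := by
        rcases mul_eq_zero.mp hqs with h | h
        · exact absurd h hq
        · exact h
      have hζ1 : Multiplicative.toAdd (ζ zu) = 0 := by rw [← hs]; exact hs0
      have hzu1 : zu = 1 := by
        apply ζ.injective
        rw [map_one]
        apply Multiplicative.toAdd.injective
        simpa using hζ1
      have hφu1 : (((zu : ↥(Subgroup.centralizer ({a} : Set A))) : A)) = 1 := by
        rw [hzu1]; rfl
      have hxp1 : (x : B) ^ p = 1 := by rw [← hu, hφu1, map_one]
      have hxB : (x : B) ≠ 1 := fun h => hx1 (Subtype.ext h)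
      exact htf (x : B) hxB (isOfFinOrder_iff_zpow_eq_one.mpr ⟨p, hp, hxp1⟩)
    · apply Subtype.ext
      rw [SubgroupClass.coe_zpow, SubgroupClass.coe_zpow]
      exact hBeq
  -- now classify D'
  letI : CommGroup ↥D' :=
    { (inferInstance : Group ↥D') with
      mul_comm := fun x y => Subtype.ext (hDcomm x x.2 y y.2) }
  have hnt : ∃ g : ↥D', g ≠ 1 :=
    ⟨⟨η a, haD'⟩, fun h => haB1 (congrArg Subtype.val h)⟩
  have hfg : Group.FG ↥D' := hBab D' hDcomm
  have htf' : ∀ g : ↥D', g ≠ 1 → ¬IsOfFinOrder g := by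
    intro g hg hfin
    obtain ⟨k, hk, hgk⟩ := isOfFinOrder_iff_zpow_eq_one.mp hfin
    have : (g : B) ^ k = 1 := by
      rw [← SubgroupClass.coe_zpow, hgk]; rfl
    exact htf (g : B) (fun h => hg (Subtype.ext h))
      (isOfFinOrder_iff_zpow_eq_one.mpr ⟨k, hk, this⟩)
  obtain ⟨e2⟩ := aux_classify ↥D' hnt hfg htf' hdep
  exact ⟨(D.equivMapOfInjective C.subtype C.subtype_injective).trans e2⟩
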